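/- For every integer n ≥ 0, consider the action of the reversal map β on the set of edges of the Fibonacci cube Γ_n, i.e., on unordered pairs {u, v} of Fibonacci strings of length n differing in exactly one position, with β({u,v}) = {β(u), β(v)}. Then: the number of edge orbits of size 1 equals ((1−(−1)^n)/2)·F_{⌊(n+1)/2⌋}; the number of edge orbits of size 2 equals (1/10)(n·F_{n+1} + 2(n+1)·F_n) − ((1−(−1)^n)/4)·F_{⌊(n+1)/2⌋}; and the total number of edge orbits equals (1/10)(n·F_{n+1} + 2(n+1)·F_n) + ((1−(−1)^n)/4)·F_{⌊(n+1)/2⌋}. -/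

import Mathlib

open scoped Classical

/-- Cyclic shift `α`: maps `u₁u₂⋯uₙ` to `uₙu₁⋯uₙ₋₁`. -/
def cyc {α : Type*} (u : List α) : List α := u.rotate (u.length - 1)

/-- `listPow v k` is the concatenation of `k` copies of `v`. -/
def listPow {α : Type*} (v : List α) (k : ℕ) : List α := (List.replicate k v).flatten

/-- The period of `u`: the least `k > 0` with `cyc^[k] u = u`. -/
noncomputable def period {α : Type*} (u : List α) : ℕ := sInf {k | 0 < k ∧ cyc^[k] u = u}

/-- `u` is primitive if it is not the concatenation of `k ≥ 2` copies of a shorter string. -/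
def IsPrimitive {α : Type*} (u : List α) : Prop :=
  ∀ (v : List α) (k : ℕ), 2 ≤ k → v.length < u.length → u ≠ listPow v k

/-- The dihedral orbit of `u`: `{α^j(u) : 0 ≤ j < n} ∪ {α^j(β(u)) : 0 ≤ j < n}`,
where `β` is reversal. -/
noncomputable def dihedralOrbit {α : Type*} [DecidableEq α] (u : List α) : Finset (List α) :=
  ((Finset.range u.length).image fun j => cyc^[j] u) ∪
    ((Finset.range u.length).image fun j => cyc^[j] u.reverse)

/-- Lucas numbers: `L₀ = 2`, `L₁ = 1`, `Lₙ = Lₙ₋₁ + Lₙ₋₂`. -/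
def lucas : ℕ → ℕ
  | 0 => 2
  | 1 => 1
  | n + 2 => lucas (n + 1) + lucas n

/-- All binary strings of length `n`, as a finset of boolean lists. -/
def allBool (n : ℕ) : Finset (List Bool) :=
  (Finset.univ : Finset (Fin n → Bool)).image fun f => List.ofFn f

/-- A Fibonacci string: a binary string with no two consecutive 1s. -/
def IsFibStr (l : List Bool) : Prop := l.Chain' fun a b => a = false ∨ b = false

/-- The Fibonacci strings of length `n` (vertices of the Fibonacci cube `Γₙ`). -/
noncomputable def fibStrings (n : ℕ) : Finset (List Bool) := (allBool n).filter IsFibStr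

/-- A Lucas string: a binary string with no two consecutive 1s which does not both
begin and end with 1. -/
def IsLucasStr (l : List Bool) : Prop :=
  IsFibStr l ∧ ¬(l.head? = some true ∧ l.getLast? = some true)

/-- The Lucas strings of length `n` (vertices of the Lucas cube `Λₙ`). -/
noncomputable def lucasStrings (n : ℕ) : Finset (List Bool) := (allBool n).filter IsLucasStr

/-- Two strings differ in exactly one position. -/
def DifferOne (u v : List Bool) : Prop :=
  u.length = v.length ∧ (List.zipWith (fun a b => a != b) u v).count true = 1

/-- The edges of the Fibonacci cube `Γₙ`, as unordered pairs of vertices. -/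
noncomputable def fibEdges (n : ℕ) : Finset (Finset (List Bool)) :=
  ((fibStrings n ×ˢ fibStrings n).filter fun p => DifferOne p.1 p.2).image fun p => {p.1, p.2}

/-- The edges of the Lucas cube `Λₙ`, as unordered pairs of vertices. -/
noncomputable def lucasEdges (n : ℕ) : Finset (Finset (List Bool)) :=
  ((lucasStrings n ×ˢ lucasStrings n).filter fun p => DifferOne p.1 p.2).image fun p => {p.1, p.2}

/-- The orbit of a vertex under the reversal map `β`. -/
def revOrbit (u : List Bool) : Finset (List Bool) := {u, u.reverse}

/-- The orbit of an edge under the reversal map `β`, acting by `β({u,v}) = {β(u),β(v)}`. -/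
def revEdgeOrbit (e : Finset (List Bool)) : Finset (Finset (List Bool)) :=
  {e, e.image List.reverse}

/-- The orbit of an edge under the dihedral action on strings of length `n`:
`{α^j(e) : 0 ≤ j < n} ∪ {α^j(β(e)) : 0 ≤ j < n}`. -/
noncomputable def dihedralEdgeOrbit (n : ℕ) (e : Finset (List Bool)) :
    Finset (Finset (List Bool)) :=
  ((Finset.range n).image fun j => e.image fun u => cyc^[j] u) ∪
    ((Finset.range n).image fun j => e.image fun u => cyc^[j] u.reverse)

-- basic membership lemmas
lemma mem_allBool {n : ℕ} {l : List Bool} : l ∈ allBool n ↔ l.length = n := by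
  constructor
  · rintro h
    simp only [allBool, Finset.mem_image] at h
    obtain ⟨f, -, rfl⟩ := h
    simp
  · rintro rfl
    simp only [allBool, Finset.mem_image]
    exact ⟨fun i => l.get i, Finset.mem_univ _, List.ofFn_get l⟩

lemma mem_fibStrings {n : ℕ} {l : List Bool} :
    l ∈ fibStrings n ↔ l.length = n ∧ IsFibStr l := by
  simp [fibStrings, mem_allBool]

-- DifferOne characterization
lemma count_true_zero {u v : List Bool} (h : u.length = v.length)
    (h0 : (List.zipWith (fun a b => a != b) u v).count true = 0) : u = v := by
  induction u generalizing v with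
  | nil => cases v with
    | nil => rfl
    | cons b t => simp at h
  | cons a t ih =>
    cases v with
    | nil => simp at h
    | cons b s =>
      simp only [List.zipWith_cons_cons, List.count_cons] at h0
      have hab : (a != b) ≠ true := by
        intro hh; simp [hh] at h0
      have : a = b := by
        revert hab; cases a <;> cases b <;> simp
      subst this
      simp only [List.length_cons, Nat.add_right_cancel_iff] at h
      have := ih h (by simpa using h0)
      simp [this]

lemma differOne_iff {u v : List Bool} :
    DifferOne u v ↔ ∃ (a b : List Bool) (x : Bool), u = a ++ x :: b ∧ v = a ++ (!x) :: b := by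
  constructor
  · rintro ⟨hlen, hcnt⟩
    induction u generalizing v with
    | nil => cases v with
      | nil => simp at hcnt
      | cons b t => simp at hlen
    | cons a t ih =>
      cases v with
      | nil => simp at hlen
      | cons b s =>
        simp only [List.length_cons, Nat.add_right_cancel_iff] at hlen
        simp only [List.zipWith_cons_cons, List.count_cons] at hcnt
        by_cases hab : a = b
        · subst hab
          simp only [bne_self_eq_false] at hcnt
          norm_num at hcnt
          obtain ⟨p, q, x, h1, h2⟩ := ih hlen hcnt
          exact ⟨a :: p, q, x, by simp [h1], by simp [h2]⟩
        · have hb : b = !a := by revert hab; cases a <;> cases b <;> simp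
          subst hb
          have : (a != !a) = true := by cases a <;> simp
          rw [this] at hcnt
          norm_num at hcnt
          have := count_true_zero hlen hcnt
          subst this
          exact ⟨[], t, a, rfl, rfl⟩
  · rintro ⟨a, b, x, rfl, rfl⟩
    constructor
    · simp
    · have : List.zipWith (fun a b => a != b) (a ++ x :: b) (a ++ (!x) :: b)
          = (List.replicate a.length false) ++ (x != !x) :: List.replicate b.length false := by
        clear * -
        induction a with
        | nil =>
          simp only [List.nil_append, List.zipWith_cons_cons, List.replicate, List.nil_append]
          congr 1
          induction b with
          | nil => simp
          | cons c t ih => simpa [List.replicate_succ] using ih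
        | cons c t ih => simpa [List.replicate_succ] using ih
      rw [this]
      have hx : (x != !x) = true := by cases x <;> simp
      simp [hx, List.count_replicate]
-- Fibonacci strings with head/last restrictions
noncomputable def fibL (n : ℕ) : Finset (List Bool) :=
  (fibStrings n).filter (fun l => l.head? ≠ some true)
noncomputable def fibR (n : ℕ) : Finset (List Bool) :=
  (fibStrings n).filter (fun l => l.getLast? ≠ some true)

lemma mem_fibL {n : ℕ} {l : List Bool} :
    l ∈ fibL n ↔ l.length = n ∧ IsFibStr l ∧ l.head? ≠ some true := by
  simp [fibL, mem_fibStrings, and_assoc]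

lemma mem_fibR {n : ℕ} {l : List Bool} :
    l ∈ fibR n ↔ l.length = n ∧ IsFibStr l ∧ l.getLast? ≠ some true := by
  simp [fibR, mem_fibStrings, and_assoc]

lemma isFibStr_cons {x : Bool} {l : List Bool} :
    IsFibStr (x :: l) ↔ (x = true → l.head? ≠ some true) ∧ IsFibStr l := by
  rw [IsFibStr, show @List.Chain' Bool = List.IsChain from rfl, List.isChain_cons]
  constructor
  · rintro ⟨h1, h2⟩
    refine ⟨fun hx hh => ?_, h2⟩
    rcases h1 true hh with h | h
    · rw [hx] at h; simp at h
    · simp at h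
  · rintro ⟨h1, h2⟩
    refine ⟨fun b hb => ?_, h2⟩
    cases x
    · left; rfl
    · cases b
      · right; rfl
      · exact absurd hb (h1 rfl)
lemma fibStrings_zero : fibStrings 0 = {[]} := by
  ext l; simp [mem_fibStrings, List.length_eq_zero_iff]
  rintro rfl; constructor

lemma fibL_zero : fibL 0 = {[]} := by
  ext l; rw [mem_fibL]
  simp [List.length_eq_zero_iff]
  rintro rfl; exact ⟨List.IsChain.nil, by simp⟩

lemma fibStrings_succ (n : ℕ) :
    fibStrings (n + 1)
      = ((fibStrings n).image (false :: ·)) ∪ ((fibL n).image (true :: ·)) := by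
  ext l
  rw [mem_fibStrings]
  simp only [Finset.mem_union, Finset.mem_image]
  constructor
  · rintro ⟨hlen, hfib⟩
    cases l with
    | nil => simp at hlen
    | cons x t =>
      simp only [List.length_cons, Nat.add_right_cancel_iff] at hlen
      rw [isFibStr_cons] at hfib
      cases x
      · exact Or.inl ⟨t, mem_fibStrings.2 ⟨hlen, hfib.2⟩, rfl⟩
      · exact Or.inr ⟨t, mem_fibL.2 ⟨hlen, hfib.2, hfib.1 rfl⟩, rfl⟩
  · rintro (⟨t, ht, rfl⟩ | ⟨t, ht, rfl⟩)
    · rw [mem_fibStrings] at ht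
      exact ⟨by simp [ht.1], isFibStr_cons.2 ⟨by simp, ht.2⟩⟩
    · rw [mem_fibL] at ht
      exact ⟨by simp [ht.1], isFibStr_cons.2 ⟨fun _ => ht.2.2, ht.2.1⟩⟩

lemma fibL_succ (n : ℕ) :
    fibL (n + 1) = (fibStrings n).image (false :: ·) := by
  ext l
  rw [mem_fibL]
  simp only [Finset.mem_image]
  constructor
  · rintro ⟨hlen, hfib, hhd⟩
    cases l with
    | nil => simp at hlen
    | cons x t =>
      cases x
      · simp only [List.length_cons, Nat.add_right_cancel_iff] at hlen
        rw [isFibStr_cons] at hfib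
        exact ⟨t, mem_fibStrings.2 ⟨hlen, hfib.2⟩, rfl⟩
      · simp at hhd
  · rintro ⟨t, ht, rfl⟩
    rw [mem_fibStrings] at ht
    exact ⟨by simp [ht.1], isFibStr_cons.2 ⟨by simp, ht.2⟩, by simp⟩

lemma cons_injective (x : Bool) : Function.Injective (x :: · : List Bool → List Bool) := by
  intro a b h; simpa using h

lemma fibStrings_card_succ (n : ℕ) :
    (fibStrings (n + 1)).card = (fibStrings n).card + (fibL n).card := by
  rw [fibStrings_succ, Finset.card_union_of_disjoint, Finset.card_image_of_injective _ (cons_injective false),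
    Finset.card_image_of_injective _ (cons_injective true)]
  rw [Finset.disjoint_left]
  rintro l hl hr
  simp only [Finset.mem_image] at hl hr
  obtain ⟨a, -, rfl⟩ := hl
  obtain ⟨b, -, h⟩ := hr
  simp at h

lemma fibL_card_succ (n : ℕ) : (fibL (n + 1)).card = (fibStrings n).card := by
  rw [fibL_succ, Finset.card_image_of_injective _ (cons_injective false)]

lemma fibStrings_card : ∀ n, (fibStrings n).card = Nat.fib (n + 2)
  | 0 => by simp [fibStrings_zero]
  | 1 => by
      rw [fibStrings_card_succ, fibStrings_zero, fibL_zero]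
      decide
  | (n + 2) => by
      rw [fibStrings_card_succ, fibL_card_succ, fibStrings_card (n+1), fibStrings_card n]
      show Nat.fib (n + 3) + Nat.fib (n + 2) = Nat.fib (n + 4)
      have h : Nat.fib (n + 4) = Nat.fib (n + 2) + Nat.fib (n + 3) :=
        Nat.fib_add_two (n := n + 2)
      rw [h, Nat.add_comm]

lemma fibL_card (n : ℕ) : (fibL n).card = Nat.fib (n + 1) := by
  cases n with
  | zero => simp [fibL_zero]
  | succ m => rw [fibL_card_succ, fibStrings_card]
lemma isFibStr_reverse {l : List Bool} : IsFibStr l.reverse ↔ IsFibStr l := by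
  rw [IsFibStr, IsFibStr, show @List.Chain' Bool = List.IsChain from rfl, List.isChain_reverse]
  constructor <;> intro h <;> exact h.imp (fun a b hab => hab.symm)

lemma fibR_eq_image (n : ℕ) : fibR n = (fibL n).image List.reverse := by
  ext l
  simp only [Finset.mem_image, mem_fibR, mem_fibL]
  constructor
  · rintro ⟨hlen, hfib, hlast⟩
    refine ⟨l.reverse, ⟨by simp [hlen], isFibStr_reverse.2 hfib, ?_⟩, by simp⟩
    rwa [List.head?_reverse]
  · rintro ⟨t, ⟨hlen, hfib, hhd⟩, rfl⟩
    refine ⟨by simp [hlen], isFibStr_reverse.2 hfib, ?_⟩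
    rwa [List.getLast?_reverse]

lemma fibR_card (n : ℕ) : (fibR n).card = Nat.fib (n + 1) := by
  rw [fibR_eq_image, Finset.card_image_of_injective _ List.reverse_injective, fibL_card]

lemma mem_fibR_reverse {n : ℕ} {l : List Bool} : l.reverse ∈ fibL n ↔ l ∈ fibR n := by
  rw [fibR_eq_image]
  constructor
  · intro h; exact Finset.mem_image.2 ⟨l.reverse, h, by simp⟩
  · intro h
    obtain ⟨t, ht, hh⟩ := Finset.mem_image.1 h
    have : t = l.reverse := by rw [← hh]; simp
    rwa [← this]

-- append characterization
lemma isFibStr_append_cons {a b : List Bool} {x : Bool} :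
    IsFibStr (a ++ x :: b)
      ↔ IsFibStr a ∧ IsFibStr b
        ∧ (x = true → (a.getLast? ≠ some true ∧ b.head? ≠ some true)) := by
  rw [IsFibStr, show @List.Chain' Bool = List.IsChain from rfl, List.isChain_append]
  constructor
  · rintro ⟨h1, h2, h3⟩
    rw [List.isChain_cons] at h2
    refine ⟨h1, h2.2, fun hx => ⟨?_, ?_⟩⟩
    · intro hl
      rcases h3 true hl x (by simp) with h | h
      · simp at h
      · rw [hx] at h; simp at h
    · intro hh
      rcases h2.1 true hh with h | h
      · rw [hx] at h; simp at h
      · simp at h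
  · rintro ⟨h1, h2, h3⟩
    refine ⟨h1, ?_, ?_⟩
    · rw [List.isChain_cons]
      refine ⟨fun y hy => ?_, h2⟩
      cases x
      · left; rfl
      · cases y
        · right; rfl
        · exact absurd hy (h3 rfl).2
    · intro y hy z hz
      simp only [List.head?_cons, Option.mem_def, Option.some_inj] at hz
      subst hz
      cases x
      · right; rfl
      · cases y
        · left; rfl
        · exact absurd hy (h3 rfl).1
lemma getElem_mid (a b : List Bool) (x : Bool) :
    (a ++ x :: b)[a.length]'(by simp) = x := by
  rw [List.getElem_append_right (le_refl _)]
  simp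

lemma mid_eq_of_append {a b c w : List Bool} {y : Bool}
    (h : a ++ y :: b = c ++ w) (hlt : a.length < c.length) : (c)[a.length]'(hlt) = y := by
  have e1 : (c ++ w)[a.length]'(by simp; omega) = (c)[a.length]'(hlt) :=
    List.getElem_append_left hlt
  have e2 : (a ++ y :: b)[a.length]'(by simp) = y := getElem_mid a b y
  rw [← e1, ← e2]
  simp only [← h]

lemma mem_fibEdges {n : ℕ} {e : Finset (List Bool)} :
    e ∈ fibEdges n
      ↔ ∃ a b : List Bool, IsFibStr a ∧ IsFibStr b ∧ a.getLast? ≠ some true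
          ∧ b.head? ≠ some true ∧ a.length + 1 + b.length = n
          ∧ e = {a ++ false :: b, a ++ true :: b} := by
  constructor
  · intro h
    simp only [fibEdges, Finset.mem_image, Finset.mem_filter, Finset.mem_product] at h
    obtain ⟨⟨u, v⟩, ⟨⟨hu, hv⟩, hd⟩, he⟩ := h
    obtain ⟨a, b, x, rfl, rfl⟩ := differOne_iff.1 hd
    rw [mem_fibStrings] at hu hv
    have hlen : a.length + 1 + b.length = n := by
      have := hu.1; simp at this; omega
    cases x
    · simp only [Bool.not_false] at hv he
      obtain ⟨h1, h2, h3⟩ := isFibStr_append_cons.1 hv.2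
      exact ⟨a, b, h1, h2, (h3 rfl).1, (h3 rfl).2, hlen, he.symm⟩
    · simp only [Bool.not_true] at hv he
      obtain ⟨h1, h2, h3⟩ := isFibStr_append_cons.1 hu.2
      refine ⟨a, b, h1, h2, (h3 rfl).1, (h3 rfl).2, hlen, ?_⟩
      rw [← he, Finset.pair_comm]
  · rintro ⟨a, b, h1, h2, h3, h4, h5, rfl⟩
    simp only [fibEdges, Finset.mem_image, Finset.mem_filter, Finset.mem_product]
    refine ⟨(a ++ false :: b, a ++ true :: b), ⟨⟨?_, ?_⟩, ?_⟩, by simp⟩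
    · exact mem_fibStrings.2 ⟨by simp; omega,
        isFibStr_append_cons.2 ⟨h1, h2, by simp⟩⟩
    · exact mem_fibStrings.2 ⟨by simp; omega,
        isFibStr_append_cons.2 ⟨h1, h2, fun _ => ⟨h3, h4⟩⟩⟩
    · exact differOne_iff.2 ⟨a, b, false, rfl, rfl⟩

noncomputable def edgesAt (n i : ℕ) : Finset (Finset (List Bool)) :=
  ((fibR i) ×ˢ (fibL (n - 1 - i))).image
    (fun p => ({p.1 ++ false :: p.2, p.1 ++ true :: p.2} : Finset (List Bool)))

lemma mem_edgesAt {n i : ℕ} (hi : i < n) {e : Finset (List Bool)} :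
    e ∈ edgesAt n i
      ↔ ∃ a b : List Bool, a.length = i ∧ IsFibStr a ∧ IsFibStr b
          ∧ a.getLast? ≠ some true ∧ b.head? ≠ some true ∧ a.length + 1 + b.length = n
          ∧ e = {a ++ false :: b, a ++ true :: b} := by
  simp only [edgesAt, Finset.mem_image, Finset.mem_product, Prod.exists]
  constructor
  · rintro ⟨a, b, ⟨ha, hb⟩, rfl⟩
    rw [mem_fibR] at ha
    rw [mem_fibL] at hb
    exact ⟨a, b, ha.1, ha.2.1, hb.2.1, ha.2.2, hb.2.2, by omega, rfl⟩
  · rintro ⟨a, b, hal, h1, h2, h3, h4, h5, rfl⟩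
    exact ⟨a, b, ⟨mem_fibR.2 ⟨hal, h1, h3⟩, mem_fibL.2 ⟨by omega, h2, h4⟩⟩, rfl⟩

lemma fibEdges_eq_biUnion (n : ℕ) :
    fibEdges n = (Finset.range n).biUnion (edgesAt n) := by
  ext e
  rw [mem_fibEdges, Finset.mem_biUnion]
  constructor
  · rintro ⟨a, b, h1, h2, h3, h4, h5, rfl⟩
    refine ⟨a.length, Finset.mem_range.2 (by omega), ?_⟩
    rw [mem_edgesAt (by omega)]
    exact ⟨a, b, rfl, h1, h2, h3, h4, h5, rfl⟩
  · rintro ⟨i, hi, he⟩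
    rw [Finset.mem_range] at hi
    obtain ⟨a, b, _, h1, h2, h3, h4, h5, rfl⟩ := (mem_edgesAt hi).1 he
    exact ⟨a, b, h1, h2, h3, h4, h5, rfl⟩

lemma edgesAt_disjoint_aux {n i j : ℕ} (hi : i < n) (hj : j < n) (hlt : i < j)
    {e : Finset (List Bool)} (hei : e ∈ edgesAt n i) (hej : e ∈ edgesAt n j) : False := by
  obtain ⟨a, b, hal, _, _, _, _, hab, he1⟩ := (mem_edgesAt hi).1 hei
  obtain ⟨c, d, hcl, _, _, _, _, hcd, he2⟩ := (mem_edgesAt hj).1 hej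
  have hac : a.length < c.length := by omega
  have m1 : (a ++ false :: b) ∈ ({c ++ false :: d, c ++ true :: d} : Finset (List Bool)) := by
    rw [← he2, he1]; simp
  have m2 : (a ++ true :: b) ∈ ({c ++ false :: d, c ++ true :: d} : Finset (List Bool)) := by
    rw [← he2, he1]; simp
  simp only [Finset.mem_insert, Finset.mem_singleton] at m1 m2
  have k1 : (c)[a.length]'(hac) = false := by
    rcases m1 with h | h
    · exact mid_eq_of_append h hac
    · exact mid_eq_of_append h hac
  have k2 : (c)[a.length]'(hac) = true := by
    rcases m2 with h | h
    · exact mid_eq_of_append h hac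
    · exact mid_eq_of_append h hac
  rw [k1] at k2
  exact absurd k2 (by simp)

lemma edgesAt_disjoint {n i j : ℕ} (hi : i < n) (hj : j < n) (hij : i ≠ j) :
    Disjoint (edgesAt n i) (edgesAt n j) := by
  rw [Finset.disjoint_left]
  intro e hei hej
  rcases Nat.lt_or_ge i j with hlt | hge
  · exact edgesAt_disjoint_aux hi hj hlt hei hej
  · exact edgesAt_disjoint_aux hj hi (by omega) hej hei

lemma edgesAt_card {n i : ℕ} (hi : i < n) :
    (edgesAt n i).card = Nat.fib (i + 1) * Nat.fib (n - i) := by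
  rw [edgesAt, Finset.card_image_of_injOn, Finset.card_product, fibR_card, fibL_card]
  · congr 2
    omega
  · rintro ⟨a, b⟩ hab ⟨c, d⟩ hcd h
    simp only [Finset.mem_coe, Finset.mem_product, mem_fibR, mem_fibL] at hab hcd
    have hal : a.length = c.length := by rw [hab.1.1, hcd.1.1]
    simp only at h
    have m1 : (a ++ false :: b) ∈ ({c ++ false :: d, c ++ true :: d} : Finset (List Bool)) := by
      rw [← h]; simp
    simp only [Finset.mem_insert, Finset.mem_singleton] at m1
    rcases m1 with h1 | h1
    · obtain ⟨rfl, h2⟩ := List.append_inj h1 hal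
      simp only [List.cons.injEq] at h2
      rw [Prod.mk.injEq]
      exact ⟨rfl, h2.2⟩
    · obtain ⟨-, h2⟩ := List.append_inj h1 hal
      simp at h2
lemma fibEdges_card (n : ℕ) :
    (fibEdges n).card = ∑ i ∈ Finset.range n, Nat.fib (i + 1) * Nat.fib (n - i) := by
  rw [fibEdges_eq_biUnion, Finset.card_biUnion]
  · exact Finset.sum_congr rfl fun i hi => edgesAt_card (Finset.mem_range.1 hi)
  · intro i hi j hj hij
    exact edgesAt_disjoint (Finset.mem_range.1 hi) (Finset.mem_range.1 hj) hij
def fibSum (n : ℕ) : ℕ := ∑ i ∈ Finset.range n, Nat.fib (i + 1) * Nat.fib (n - i)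

lemma fibSum_succ (n : ℕ) : fibSum (n + 2) = fibSum (n + 1) + fibSum n + Nat.fib (n + 2) := by
  unfold fibSum
  rw [Finset.sum_range_succ]
  rw [show n + 2 - (n + 1) = 1 by omega]
  simp only [Nat.fib_one, mul_one]
  have hsplit : ∑ i ∈ Finset.range (n + 1), Nat.fib (i + 1) * Nat.fib (n + 2 - i)
      = ∑ i ∈ Finset.range (n + 1),
          (Nat.fib (i + 1) * Nat.fib (n + 1 - i) + Nat.fib (i + 1) * Nat.fib (n - i)) := by
    apply Finset.sum_congr rfl
    intro i hi
    rw [Finset.mem_range] at hi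
    rw [show n + 2 - i = (n - i) + 2 by omega, Nat.fib_add_two, Nat.mul_add,
      show n - i + 1 = n + 1 - i by omega]
    ring
  rw [hsplit, Finset.sum_add_distrib,
    Finset.sum_range_succ (f := fun i => Nat.fib (i + 1) * Nat.fib (n - i))]
  simp [Nat.sub_self]

lemma fibSum_id : ∀ n : ℕ,
    5 * fibSum n = n * Nat.fib (n + 1) + 2 * (n + 1) * Nat.fib n
  | 0 => by simp [fibSum]
  | 1 => by
      rw [show (1 : ℕ) = 0 + 1 from rfl, fibSum, Finset.sum_range_succ]
      simp [fibSum]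
  | (n + 2) => by
      rw [fibSum_succ, Nat.mul_add, Nat.mul_add, fibSum_id (n + 1), fibSum_id n]
      have h2 : Nat.fib (n + 2) = Nat.fib (n + 1) + Nat.fib n := by
        rw [Nat.fib_add_two]; ring
      have h3 : Nat.fib (n + 3) = Nat.fib (n + 2) + Nat.fib (n + 1) := by
        have := Nat.fib_add_two (n := n + 1)
        rw [show n + 1 + 2 = n + 3 from rfl, show n + 1 + 1 = n + 2 from rfl] at this
        rw [this]; ring
      rw [show n + 2 + 1 = n + 3 by omega, show n + 1 + 1 = n + 2 by omega, h3, h2]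
      ring
lemma image_reverse_pair (u v : List Bool) :
    ({u, v} : Finset (List Bool)).image List.reverse = {u.reverse, v.reverse} := by
  simp [Finset.image_insert]

lemma reverse_append_cons (a b : List Bool) (x : Bool) :
    (a ++ x :: b).reverse = b.reverse ++ x :: a.reverse := by
  simp

noncomputable def fixedEdges (n : ℕ) : Finset (Finset (List Bool)) :=
  (fibEdges n).filter (fun e => e.image List.reverse = e)

lemma mem_fixedEdges {n : ℕ} {e : Finset (List Bool)} :
    e ∈ fixedEdges n
      ↔ ∃ a : List Bool, IsFibStr a ∧ a.getLast? ≠ some true ∧ 2 * a.length + 1 = n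
          ∧ e = {a ++ false :: a.reverse, a ++ true :: a.reverse} := by
  rw [fixedEdges, Finset.mem_filter]
  constructor
  · rintro ⟨hmem, hfix⟩
    obtain ⟨a, b, h1, h2, h3, h4, h5, he⟩ := mem_fibEdges.1 hmem
    have hrev : e.image List.reverse
        = {b.reverse ++ false :: a.reverse, b.reverse ++ true :: a.reverse} := by
      rw [he, image_reverse_pair, reverse_append_cons, reverse_append_cons]
    have heq : ({b.reverse ++ false :: a.reverse, b.reverse ++ true :: a.reverse} :
        Finset (List Bool)) = {a ++ false :: b, a ++ true :: b} := by
      rw [← hrev, hfix, he]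
    -- first, lengths must agree
    have hlen : b.length = a.length := by
      by_contra hne
      have hea : e ∈ edgesAt n a.length := by
        rw [mem_edgesAt (by omega)]
        exact ⟨a, b, rfl, h1, h2, h3, h4, h5, he⟩
      have heb : e ∈ edgesAt n b.length := by
        rw [mem_edgesAt (by omega)]
        refine ⟨b.reverse, a.reverse, by simp, isFibStr_reverse.2 h2, isFibStr_reverse.2 h1,
          ?_, ?_, by simp; omega, by rw [he, ← heq]⟩
        · rwa [List.getLast?_reverse]
        · rwa [List.head?_reverse]
      exact Finset.disjoint_left.1
        (edgesAt_disjoint (i := a.length) (j := b.length) (by omega) (by omega)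
          (fun hh => hne hh.symm)) hea heb
    -- now extract b = a.reverse
    have hmem2 : b.reverse ++ false :: a.reverse
        ∈ ({a ++ false :: b, a ++ true :: b} : Finset (List Bool)) := by
      rw [← heq]; simp
    simp only [Finset.mem_insert, Finset.mem_singleton] at hmem2
    have hba : b.reverse = a := by
      rcases hmem2 with h | h
      · exact (List.append_inj h (by simp [hlen])).1
      · obtain ⟨-, hcontra⟩ := List.append_inj h (by simp [hlen])
        simp at hcontra
    have hbar : b = a.reverse := by rw [← hba]; simp
    exact ⟨a, h1, h3, by omega, by rw [he, hbar]⟩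
  · rintro ⟨a, h1, h3, hlen, rfl⟩
    constructor
    · rw [mem_fibEdges]
      refine ⟨a, a.reverse, h1, isFibStr_reverse.2 h1, h3, ?_, by simp; omega, rfl⟩
      rwa [List.head?_reverse]
    · rw [image_reverse_pair, reverse_append_cons, reverse_append_cons]
      simp

lemma fixedEdges_card (n : ℕ) :
    (fixedEdges n).card = (if n % 2 = 1 then Nat.fib ((n + 1) / 2) else 0) := by
  rcases Nat.even_or_odd n with ⟨m, hm⟩ | ⟨m, hm⟩
  · have : fixedEdges n = ∅ := by
      ext e
      rw [mem_fixedEdges]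
      simp only [Finset.notMem_empty, iff_false, not_exists]
      rintro a ⟨-, -, hl, -⟩
      omega
    rw [this]
    simp only [Finset.card_empty]
    rw [if_neg (by omega)]
  · have hEq : fixedEdges n
        = (fibR m).image
            (fun a => ({a ++ false :: a.reverse, a ++ true :: a.reverse} :
              Finset (List Bool))) := by
      ext e
      rw [mem_fixedEdges, Finset.mem_image]
      constructor
      · rintro ⟨a, h1, h3, hl, rfl⟩
        exact ⟨a, mem_fibR.2 ⟨by omega, h1, h3⟩, rfl⟩
      · rintro ⟨a, ha, rfl⟩
        rw [mem_fibR] at ha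
        exact ⟨a, ha.2.1, ha.2.2, by omega, rfl⟩
    rw [hEq, Finset.card_image_of_injOn, fibR_card, if_pos (by omega),
      show (n + 1) / 2 = m + 1 by omega]
    intro a ha c hc h
    simp only [Finset.mem_coe, mem_fibR] at ha hc
    have hlen : a.length = c.length := by rw [ha.1, hc.1]
    simp only at h
    have m1 : (a ++ false :: a.reverse)
        ∈ ({c ++ false :: c.reverse, c ++ true :: c.reverse} : Finset (List Bool)) := by
      rw [← h]; simp
    simp only [Finset.mem_insert, Finset.mem_singleton] at m1
    rcases m1 with h1 | h1
    · exact (List.append_inj h1 hlen).1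
    · obtain ⟨-, hcontra⟩ := List.append_inj h1 hlen
      simp at hcontra
lemma rev_image_mem {n : ℕ} {e : Finset (List Bool)} (h : e ∈ fibEdges n) :
    e.image List.reverse ∈ fibEdges n := by
  obtain ⟨a, b, h1, h2, h3, h4, h5, rfl⟩ := mem_fibEdges.1 h
  rw [image_reverse_pair, reverse_append_cons, reverse_append_cons]
  rw [mem_fibEdges]
  refine ⟨b.reverse, a.reverse, isFibStr_reverse.2 h2, isFibStr_reverse.2 h1, ?_, ?_,
    by simp; omega, rfl⟩
  · rwa [List.getLast?_reverse]
  · rwa [List.head?_reverse]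

lemma rev_image_involutive (e : Finset (List Bool)) :
    (e.image List.reverse).image List.reverse = e := by
  rw [Finset.image_image]
  simp

lemma revEdgeOrbit_card_one_iff (e : Finset (List Bool)) :
    (revEdgeOrbit e).card = 1 ↔ e.image List.reverse = e := by
  unfold revEdgeOrbit
  by_cases h : e.image List.reverse = e
  · simp [h]
  · have h2 : ({e, e.image List.reverse} : Finset (Finset (List Bool))).card = 2 :=
      Finset.card_pair (fun hh => h hh.symm)
    rw [h2]
    simp [h]

lemma revEdgeOrbit_card_le (e : Finset (List Bool)) : (revEdgeOrbit e).card ≤ 2 := by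
  unfold revEdgeOrbit
  exact Finset.card_insert_le _ _ |>.trans (by simp)

lemma revEdgeOrbit_card_pos (e : Finset (List Bool)) : 1 ≤ (revEdgeOrbit e).card := by
  unfold revEdgeOrbit
  refine Finset.card_pos.2 ⟨e, by simp⟩

lemma orbits_card_one (n : ℕ) :
    (((fibEdges n).image revEdgeOrbit).filter (fun O => O.card = 1)).card
      = (fixedEdges n).card := by
  have himg : ((fibEdges n).image revEdgeOrbit).filter (fun O => O.card = 1)
      = (fixedEdges n).image (fun e => ({e} : Finset (Finset (List Bool)))) := by
    ext O
    simp only [Finset.mem_filter, Finset.mem_image]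
    constructor
    · rintro ⟨⟨e, he, rfl⟩, hc⟩
      rw [revEdgeOrbit_card_one_iff] at hc
      refine ⟨e, Finset.mem_filter.2 ⟨he, hc⟩, ?_⟩
      unfold revEdgeOrbit
      rw [hc]
      simp
    · rintro ⟨e, he, rfl⟩
      rw [fixedEdges, Finset.mem_filter] at he
      have horb : revEdgeOrbit e = {e} := by
        unfold revEdgeOrbit
        rw [he.2]
        simp
      exact ⟨⟨e, he.1, horb⟩, by simp⟩
  rw [himg, Finset.card_image_of_injective]
  intro a b h
  simpa using h

lemma orbits_card_two (n : ℕ) :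
    (fibEdges n).card
      = (fixedEdges n).card
        + 2 * (((fibEdges n).image revEdgeOrbit).filter (fun O => O.card = 2)).card := by
  classical
  set N := (fibEdges n).filter (fun e => ¬ (e.image List.reverse = e)) with hN
  have hsplit : (fibEdges n).card = (fixedEdges n).card + N.card := by
    rw [fixedEdges, hN]
    exact (Finset.card_filter_add_card_filter_not _).symm
  have himg : N.image revEdgeOrbit
      = ((fibEdges n).image revEdgeOrbit).filter (fun O => O.card = 2) := by
    ext O
    simp only [Finset.mem_image, Finset.mem_filter, hN]
    constructor
    · rintro ⟨e, he, rfl⟩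
      refine ⟨⟨e, he.1, rfl⟩, ?_⟩
      unfold revEdgeOrbit
      exact Finset.card_pair (fun hh => he.2 hh.symm)
    · rintro ⟨⟨e, he, rfl⟩, hc⟩
      refine ⟨e, ⟨he, fun hf => ?_⟩, rfl⟩
      rw [(revEdgeOrbit_card_one_iff e).2 hf] at hc
      omega
  have hfiber : ∀ O ∈ N.image revEdgeOrbit, (N.filter (fun e => revEdgeOrbit e = O)).card = 2 := by
    intro O hO
    obtain ⟨e, he, rfl⟩ := Finset.mem_image.1 hO
    rw [Finset.mem_filter] at he
    have hne : e ≠ e.image List.reverse := fun hh => he.2 hh.symm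
    have hfib : N.filter (fun x => revEdgeOrbit x = revEdgeOrbit e)
        = {e, e.image List.reverse} := by
      ext x
      simp only [Finset.mem_filter, Finset.mem_insert, Finset.mem_singleton]
      constructor
      · rintro ⟨hx, horb⟩
        have : x ∈ revEdgeOrbit e := by
          rw [← horb]
          unfold revEdgeOrbit
          simp
        simpa [revEdgeOrbit] using this
      · rintro (rfl | rfl)
        · exact ⟨Finset.mem_filter.2 he, rfl⟩
        · refine ⟨Finset.mem_filter.2 ⟨rev_image_mem he.1, ?_⟩, ?_⟩
          · rw [rev_image_involutive]
            exact fun hh => he.2 hh.symm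
          · unfold revEdgeOrbit
            rw [rev_image_involutive, Finset.pair_comm]
    rw [hfib]
    exact Finset.card_pair hne
  have hcount : N.card = 2 * (N.image revEdgeOrbit).card := by
    rw [Finset.card_eq_sum_card_image revEdgeOrbit N]
    rw [Finset.sum_congr rfl hfiber, Finset.sum_const, smul_eq_mul, Nat.mul_comm]
  rw [hsplit, hcount, himg]

lemma orbits_total (n : ℕ) :
    ((fibEdges n).image revEdgeOrbit).card
      = (((fibEdges n).image revEdgeOrbit).filter (fun O => O.card = 1)).card
        + (((fibEdges n).image revEdgeOrbit).filter (fun O => O.card = 2)).card := by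
  classical
  rw [← Finset.card_filter_add_card_filter_not
    (s := (fibEdges n).image revEdgeOrbit) (p := fun O => O.card = 1)]
  congr 1
  have heq : Finset.filter (fun a => ¬a.card = 1) ((fibEdges n).image revEdgeOrbit)
      = Finset.filter (fun O => O.card = 2) ((fibEdges n).image revEdgeOrbit) := by
    apply Finset.filter_congr
    intro O hO
    obtain ⟨e, -, rfl⟩ := Finset.mem_image.1 hO
    have h1 := revEdgeOrbit_card_le e
    have h2 := revEdgeOrbit_card_pos e
    constructor
    · intro h; omega
    · intro h; omega
  rw [heq]

/-- Edge orbits of the Fibonacci cube `Γₙ` under the reversal map, for `n ≥ 0`: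
the number of orbits of size 1 equals `((1−(−1)ⁿ)/2)·F_{⌊(n+1)/2⌋}`; the number of orbits
of size 2 equals `(1/10)(n·F_{n+1} + 2(n+1)·Fₙ) − ((1−(−1)ⁿ)/4)·F_{⌊(n+1)/2⌋}`; and the
total number of orbits equals
`(1/10)(n·F_{n+1} + 2(n+1)·Fₙ) + ((1−(−1)ⁿ)/4)·F_{⌊(n+1)/2⌋}`. -/
theorem fib_edge_orbits (n : ℕ) :
    (((((fibEdges n).image revEdgeOrbit).filter fun O => O.card = 1).card : ℚ)
        = (1 - (-1 : ℚ) ^ n) / 2 * (Nat.fib ((n + 1) / 2) : ℚ)) ∧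
    (((((fibEdges n).image revEdgeOrbit).filter fun O => O.card = 2).card : ℚ)
        = (1 / 10) * ((n : ℚ) * (Nat.fib (n + 1) : ℚ) + 2 * ((n : ℚ) + 1) * (Nat.fib n : ℚ))
          - (1 - (-1 : ℚ) ^ n) / 4 * (Nat.fib ((n + 1) / 2) : ℚ)) ∧
    ((((fibEdges n).image revEdgeOrbit).card : ℚ)
        = (1 / 10) * ((n : ℚ) * (Nat.fib (n + 1) : ℚ) + 2 * ((n : ℚ) + 1) * (Nat.fib n : ℚ))
          + (1 - (-1 : ℚ) ^ n) / 4 * (Nat.fib ((n + 1) / 2) : ℚ)) := by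
  have hc1 := orbits_card_one n
  have hc2 := orbits_card_two n
  have htot := orbits_total n
  have hE : (fibEdges n).card = fibSum n := fibEdges_card n
  have h5 := fibSum_id n
  have hfix := fixedEdges_card n
  have q5 : (5 : ℚ) * ((fibSum n : ℕ) : ℚ)
      = (n : ℚ) * (Nat.fib (n + 1) : ℚ) + 2 * ((n : ℚ) + 1) * (Nat.fib n : ℚ) := by
    exact_mod_cast h5
  have qE : (((fibEdges n).card : ℕ) : ℚ) = ((fibSum n : ℕ) : ℚ) := by exact_mod_cast hE
  have qc1 : ((((((fibEdges n).image revEdgeOrbit).filter fun O => O.card = 1).card : ℕ)) : ℚ)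
      = (((fixedEdges n).card : ℕ) : ℚ) := by exact_mod_cast hc1
  have qc2 : (((fibEdges n).card : ℕ) : ℚ)
      = (((fixedEdges n).card : ℕ) : ℚ)
        + 2 * (((((fibEdges n).image revEdgeOrbit).filter fun O => O.card = 2).card : ℕ) : ℚ) := by
    exact_mod_cast hc2
  have qtot : ((((fibEdges n).image revEdgeOrbit).card : ℕ) : ℚ)
      = ((((((fibEdges n).image revEdgeOrbit).filter fun O => O.card = 1).card : ℕ)) : ℚ)
        + (((((fibEdges n).image revEdgeOrbit).filter fun O => O.card = 2).card : ℕ) : ℚ) := by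
    exact_mod_cast htot
  rcases Nat.even_or_odd n with hpar | hpar
  · have hΦ : (fixedEdges n).card = 0 := by
      rw [hfix, if_neg]
      have := Nat.even_iff.1 hpar
      omega
    have qΦ : (((fixedEdges n).card : ℕ) : ℚ) = 0 := by exact_mod_cast hΦ
    have hpow : ((-1 : ℚ)) ^ n = 1 := hpar.neg_one_pow
    refine ⟨?_, ?_, ?_⟩ <;> rw [hpow] <;> linarith [q5, qE, qc1, qc2, qtot, qΦ]
  · have hΦ : (fixedEdges n).card = Nat.fib ((n + 1) / 2) := by
      rw [hfix, if_pos (Nat.odd_iff.1 hpar)]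
    have qΦ : (((fixedEdges n).card : ℕ) : ℚ) = (Nat.fib ((n + 1) / 2) : ℚ) := by
      exact_mod_cast hΦ
    have hpow : ((-1 : ℚ)) ^ n = -1 := hpar.neg_one_pow
    refine ⟨?_, ?_, ?_⟩ <;> rw [hpow] <;> linarith [q5, qE, qc1, qc2, qtot, qΦ]
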